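/- Let α, β ∈ S_n be nonidentity permutations with at least one of them fixed point free. If both α and β move at least 4 points, then there exists σ ∈ S_n such that σ⁻¹ασ·β has at least two fixed points. -/

import Mathlib

open Equiv
variable {n' : ℕ}

lemma exists_perm_comp {X : Type*} [Fintype X] {k : ℕ} (f g : Fin k → X)
    (hf : Function.Injective f) (hg : Function.Injective g) :
    ∃ σ : Equiv.Perm X, ∀ i, σ (f i) = g i := by
  classical
  let e : {x // x ∈ Set.range f} ≃ {x // x ∈ Set.range g} :=
    (Equiv.ofInjective f hf).symm.trans (Equiv.ofInjective g hg)
  refine ⟨e.extendSubtype, fun i => ?_⟩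
  have hmem : f i ∈ Set.range f := ⟨i, rfl⟩
  rw [e.extendSubtype_apply_of_mem _ hmem]
  have : (⟨f i, hmem⟩ : {x // x ∈ Set.range f}) = Equiv.ofInjective f hf i := rfl
  rw [this]
  simp [e]

lemma pick_two (γ : Equiv.Perm (Fin n')) (h : 4 ≤ γ.support.card) :
    ∃ i₁ i₂ : Fin n', i₁ ∈ γ.support ∧ i₂ ∈ γ.support ∧
      i₂ ≠ i₁ ∧ i₂ ≠ γ i₁ ∧ γ i₂ ≠ i₁ := by
  obtain ⟨i₁, hi₁⟩ : γ.support.Nonempty := Finset.card_pos.mp (by omega)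
  have hne : (γ.support \ {i₁, γ i₁, γ⁻¹ i₁}).Nonempty := by
    rw [← Finset.card_pos]
    have h3 : ({i₁, γ i₁, γ⁻¹ i₁} : Finset (Fin n')).card ≤ 3 := by
      apply le_trans (Finset.card_insert_le _ _)
      simp [Finset.card_insert_le]
      exact lt_of_le_of_lt Finset.card_le_two (by norm_num)
    have := Finset.le_card_sdiff ({i₁, γ i₁, γ⁻¹ i₁} : Finset (Fin n')) γ.support
    omega
  obtain ⟨i₂, hi₂⟩ := hne
  rw [Finset.mem_sdiff, Finset.mem_insert, Finset.mem_insert, Finset.mem_singleton] at hi₂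
  push_neg at hi₂
  refine ⟨i₁, i₂, hi₁, hi₂.1, hi₂.2.1, hi₂.2.2.1, ?_⟩
  intro h'
  exact hi₂.2.2.2 (by rw [← h']; simp)

theorem stmt13 (n : ℕ) (hn : 4 ≤ n) (α β : Equiv.Perm (Fin n)) (hα : α ≠ 1) (hβ : β ≠ 1)
    (hfpf : (∀ i : Fin n, α i ≠ i) ∨ (∀ i : Fin n, β i ≠ i))
    (hmα : 4 ≤ α.support.card) (hmβ : 4 ≤ β.support.card) :
    ∃ σ : Equiv.Perm (Fin n),
      2 ≤ (Finset.univ.filter fun i => (σ⁻¹ * α * σ * β) i = i).card := by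
  classical
  obtain ⟨i₁, i₂, hi₁, hi₂, h21, h2b1, hb21⟩ := pick_two β hmβ
  obtain ⟨x, y, hx, hy, hyx, hybx, hbyx⟩ := pick_two α hmα
  have hi₁' : β i₁ ≠ i₁ := Equiv.Perm.mem_support.mp hi₁
  have hi₂' : β i₂ ≠ i₂ := Equiv.Perm.mem_support.mp hi₂
  have hx' : α x ≠ x := Equiv.Perm.mem_support.mp hx
  have hy' : α y ≠ y := Equiv.Perm.mem_support.mp hy
  have hbb : β i₂ ≠ β i₁ := fun h => h21 (β.injective h)
  have haa : α y ≠ α x := fun h => hyx (α.injective h)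
  set f : Fin 4 → Fin n := ![β i₁, i₁, β i₂, i₂] with hf
  set g : Fin 4 → Fin n := ![x, α x, y, α y] with hg
  have hfi : Function.Injective f := by
    rw [← List.nodup_ofFn]
    simp [hf, hi₁'.symm, hi₂'.symm, h21, h2b1, hb21, hbb, h21.symm, h2b1.symm, hb21.symm, hbb.symm]
    exact ⟨hi₁', hi₂'⟩
  have hgi : Function.Injective g := by
    rw [← List.nodup_ofFn]
    simp [hg, hx', hy', hyx, hybx, hbyx, haa, hx'.symm, hy'.symm, hyx.symm, hybx.symm, hbyx.symm, haa.symm]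
  obtain ⟨σ, hσ⟩ := exists_perm_comp f g hfi hgi
  have h0 := hσ 0
  have h1 := hσ 1
  have h2 := hσ 2
  have h3 := hσ 3
  simp [hf, hg] at h0 h1 h2 h3
  refine ⟨σ, ?_⟩
  have hfix1 : (σ⁻¹ * α * σ * β) i₁ = i₁ := by
    rw [Equiv.Perm.mul_apply, Equiv.Perm.mul_apply, Equiv.Perm.mul_apply, h0, ← h1,
      ← Equiv.Perm.mul_apply, inv_mul_cancel, Equiv.Perm.one_apply]
  have hfix2 : (σ⁻¹ * α * σ * β) i₂ = i₂ := by
    rw [Equiv.Perm.mul_apply, Equiv.Perm.mul_apply, Equiv.Perm.mul_apply, h2, ← h3,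
      ← Equiv.Perm.mul_apply, inv_mul_cancel, Equiv.Perm.one_apply]
  have hsub : ({i₁, i₂} : Finset (Fin n)) ⊆
      Finset.univ.filter fun i => (σ⁻¹ * α * σ * β) i = i := by
    intro z hz
    simp only [Finset.mem_insert, Finset.mem_singleton] at hz
    rcases hz with rfl | rfl <;>
      simp only [Finset.mem_filter, Finset.mem_univ, true_and]
    · exact hfix1
    · exact hfix2
  calc 2 = ({i₁, i₂} : Finset (Fin n)).card := by rw [Finset.card_pair (Ne.symm h21)]
    _ ≤ _ := Finset.card_le_card hsub
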